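/- Let H be a real inner product space, let R > 0, and let w* ∈ H. For each t ∈ {1,...,T} let a_t, b_t, c_t ∈ H (the feature vectors φ(x_t, ȳ_t), φ(x_t, y_t), φ(x_t, y_t*) of the feedback object, the presented object, and the optimal object) satisfy ‖a_t‖ ≤ R, ‖b_t‖ ≤ R, ‖c_t‖ ≤ R. Define the Preference Perceptron iterates by w_1 = 0 and w_{t+1} = w_t + a_t − b_t, and assume the argmax prediction property ⟨w_t, a_t − b_t⟩ ≤ 0 for every t (since the presented object maximizes ⟨w_t, φ(x_t, ·)⟩). Suppose the feedback is α-informative: there exist α ∈ (0,1] and reals ξ_t ≥ 0 with ⟨w*, a_t⟩ − ⟨w*, b_t⟩ = α(⟨w*, c_t⟩ − ⟨w*, b_t⟩) − ξ_t for all t. Then the average utility regret satisfies (1/T) · Σ_{t=1}^T (⟨w*, c_t⟩ − ⟨w*, b_t⟩) ≤ (1/(αT)) · Σ_{t=1}^T ξ_t + 2R‖w*‖/(α√T). -/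

import Mathlib

open scoped RealInnerProductSpace

/-- Theorem 1 (Preference Perceptron regret bound): under `α`-informative feedback,
the average utility regret is at most `(1/(αT)) Σ ξ_t + 2R‖w*‖/(α√T)`. -/
theorem preference_perceptron_regret
    {H : Type*} [NormedAddCommGroup H] [InnerProductSpace ℝ H]
    (R : ℝ) (hR : 0 < R) (wstar : H) (T : ℕ) (hT : 0 < T)
    (a b c : ℕ → H) (w : ℕ → H)
    (ha : ∀ t ∈ Finset.Icc 1 T, ‖a t‖ ≤ R)
    (hb : ∀ t ∈ Finset.Icc 1 T, ‖b t‖ ≤ R)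
    (hc : ∀ t ∈ Finset.Icc 1 T, ‖c t‖ ≤ R)
    (hw1 : w 1 = 0)
    (hwrec : ∀ t ∈ Finset.Icc 1 T, w (t + 1) = w t + a t - b t)
    (hargmax : ∀ t ∈ Finset.Icc 1 T, ⟪w t, a t - b t⟫ ≤ 0)
    (α : ℝ) (hα : α ∈ Set.Ioc (0 : ℝ) 1)
    (ξ : ℕ → ℝ) (hξ : ∀ t ∈ Finset.Icc 1 T, 0 ≤ ξ t)
    (hfeed : ∀ t ∈ Finset.Icc 1 T,
      ⟪wstar, a t⟫ - ⟪wstar, b t⟫ = α * (⟪wstar, c t⟫ - ⟪wstar, b t⟫) - ξ t) :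
    (1 / (T : ℝ)) * ∑ t ∈ Finset.Icc 1 T, (⟪wstar, c t⟫ - ⟪wstar, b t⟫)
      ≤ (1 / (α * T)) * ∑ t ∈ Finset.Icc 1 T, ξ t
        + 2 * R * ‖wstar‖ / (α * Real.sqrt T) := by
  obtain ⟨hα0, hα1⟩ := hα
  have hTpos : (0:ℝ) < T := Nat.cast_pos.mpr hT
  -- key induction: norm bound and sum representation
  have key : ∀ n, n ≤ T →
      ‖w (n+1)‖^2 ≤ 4 * R^2 * n ∧ w (n+1) = ∑ t ∈ Finset.Icc 1 n, (a t - b t) := by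
    intro n hn
    induction n with
    | zero => simp [hw1]
    | succ k ih =>
      have hk : k ≤ T := Nat.le_of_succ_le hn
      obtain ⟨ihn, ihs⟩ := ih hk
      have hmem : k + 1 ∈ Finset.Icc 1 T := Finset.mem_Icc.mpr ⟨Nat.succ_le_succ (Nat.zero_le _), hn⟩
      have hrec := hwrec _ hmem
      constructor
      · have heq : w (k+1+1) = w (k+1) + (a (k+1) - b (k+1)) := by rw [hrec]; abel
        rw [heq, norm_add_sq_real]
        have hab : ‖a (k+1) - b (k+1)‖ ≤ 2 * R := by
          calc ‖a (k+1) - b (k+1)‖ ≤ ‖a (k+1)‖ + ‖b (k+1)‖ := norm_sub_le _ _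
            _ ≤ R + R := add_le_add (ha _ hmem) (hb _ hmem)
            _ = 2 * R := by ring
        have hab2 : ‖a (k+1) - b (k+1)‖^2 ≤ 4 * R^2 := by
          have := sq_le_sq' (by nlinarith [norm_nonneg (a (k+1) - b (k+1))]) hab
          nlinarith
        have hinner := hargmax _ hmem
        have : ((k:ℝ)+1) = (((k+1 : ℕ)):ℝ) := by push_cast; ring
        push_cast
        nlinarith
      · rw [hrec, ihs, Finset.sum_Icc_succ_top (by omega)]
        abel
  obtain ⟨hnorm2, hsum⟩ := key T le_rfl
  -- ⟨wstar, w(T+1)⟩ equals the sum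
  have hinnersum : ⟪wstar, w (T+1)⟫ = ∑ t ∈ Finset.Icc 1 T, (⟪wstar, a t⟫ - ⟪wstar, b t⟫) := by
    rw [hsum, inner_sum]
    exact Finset.sum_congr rfl fun t _ => by rw [inner_sub_right]
  -- Cauchy-Schwarz bound
  have hbound : ⟪wstar, w (T+1)⟫ ≤ ‖wstar‖ * (2 * R * Real.sqrt T) := by
    have h1 : ⟪wstar, w (T+1)⟫ ≤ ‖wstar‖ * ‖w (T+1)‖ :=
      real_inner_le_norm _ _
    have h2 : ‖w (T+1)‖ ≤ 2 * R * Real.sqrt T := by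
      have h3 : (2 * R * Real.sqrt T)^2 = 4 * R^2 * T := by
        rw [mul_pow, mul_pow, Real.sq_sqrt hTpos.le]; ring
      have h4 : ‖w (T+1)‖^2 ≤ (2 * R * Real.sqrt T)^2 := by rw [h3]; exact hnorm2
      have h5 : 0 ≤ 2 * R * Real.sqrt T := by positivity
      nlinarith [norm_nonneg (w (T+1))]
    nlinarith [norm_nonneg wstar]
  -- use feedback
  have hfeedsum : ∑ t ∈ Finset.Icc 1 T, (⟪wstar, a t⟫ - ⟪wstar, b t⟫)
      = α * ∑ t ∈ Finset.Icc 1 T, (⟪wstar, c t⟫ - ⟪wstar, b t⟫)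
        - ∑ t ∈ Finset.Icc 1 T, ξ t := by
    rw [Finset.mul_sum, ← Finset.sum_sub_distrib]
    exact Finset.sum_congr rfl fun t ht => hfeed t ht
  have hmain : α * ∑ t ∈ Finset.Icc 1 T, (⟪wstar, c t⟫ - ⟪wstar, b t⟫)
      ≤ ∑ t ∈ Finset.Icc 1 T, ξ t + ‖wstar‖ * (2 * R * Real.sqrt T) := by
    have := hinnersum ▸ hbound
    linarith [hfeedsum ▸ this]
  -- divide by α T
  have hsqrtT : Real.sqrt T > 0 := Real.sqrt_pos.mpr hTpos
  have hTsqrt : (T:ℝ) = Real.sqrt T * Real.sqrt T := (Real.mul_self_sqrt hTpos.le).symm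
  set S := ∑ t ∈ Finset.Icc 1 T, (⟪wstar, c t⟫ - ⟪wstar, b t⟫) with hS
  set X := ∑ t ∈ Finset.Icc 1 T, ξ t with hX
  calc (1/(T:ℝ)) * S = (1/(α*T)) * (α * S) := by
        field_simp
    _ ≤ (1/(α*T)) * (X + ‖wstar‖ * (2 * R * Real.sqrt T)) :=
        mul_le_mul_of_nonneg_left hmain (by positivity)
    _ = (1/(α*T)) * X + 2 * R * ‖wstar‖ / (α * Real.sqrt T) := by
        rw [mul_add]
        congr 1
        field_simp
        linear_combination (-‖wstar‖) * hTsqrt
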